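/- arXiv:1401.2186 — 2 statements merged into one kernel-verified Lean document; each statement's English description precedes it below -/
import Mathlib

section
/- Let (μ, (f_i)) be a monic system with associated operators S_i f = f_i·(f∘σ) on L²(μ). Then for every finite word I = i₁…iₙ, the operator S_I S_I* (where S_I = S_{i₁}⋯S_{iₙ}) equals multiplication by the characteristic function of the cylinder set C(I). -/
open MeasureTheory ENNReal
open scoped NNReal

noncomputable section

abbrev Word (N : ℕ) := ℕ → Fin N

/-- The left shift `σ` deleting the first letter. -/
def shift {N : ℕ} (ω : Word N) : Word N := fun n => ω (n + 1)

/-- The map `σ_i` prepending the letter `i`. -/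
def prepend {N : ℕ} (i : Fin N) (ω : Word N) : Word N :=
  fun n => match n with
  | 0 => i
  | n + 1 => ω n

/-- The cylinder set determined by a finite word. -/
def cyl {N : ℕ} (w : List (Fin N)) : Set (Word N) :=
  {ω | ∀ k : Fin w.length, ω k = w.get k}

lemma measurable_shift {N : ℕ} : Measurable (shift (N := N)) :=
  measurable_pi_lambda _ fun n => measurable_pi_apply (n + 1)

lemma measurable_prepend {N : ℕ} (i : Fin N) : Measurable (prepend i) := by
  apply measurable_pi_lambda
  intro n
  match n with
  | 0 => exact measurable_const
  | n + 1 => exact measurable_pi_apply n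

lemma shift_prepend {N : ℕ} (i : Fin N) (ω : Word N) : shift (prepend i ω) = ω := rfl

lemma prepend_shift {N : ℕ} {i : Fin N} {x : Word N} (h : x 0 = i) :
    prepend i (shift x) = x := by
  funext n
  match n with
  | 0 => exact h.symm
  | n + 1 => rfl

lemma cyl_nil {N : ℕ} : cyl ([] : List (Fin N)) = Set.univ := by
  ext ω; simp [cyl]

lemma mem_cyl_cons {N : ℕ} {i : Fin N} {w : List (Fin N)} {x : Word N} :
    x ∈ cyl (i :: w) ↔ x 0 = i ∧ shift x ∈ cyl w := by
  constructor
  · intro h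
    refine ⟨h ⟨0, Nat.succ_pos _⟩, fun k => ?_⟩
    have := h ⟨k.1 + 1, Nat.succ_lt_succ k.2⟩
    simpa [shift] using this
  · rintro ⟨h0, hs⟩ k
    match k with
    | ⟨0, _⟩ => exact h0
    | ⟨m + 1, hm⟩ =>
      have := hs ⟨m, Nat.lt_of_succ_lt_succ hm⟩
      simpa [shift] using this

section Meas

variable {N : ℕ} {μ : Measure (Word N)} [IsFiniteMeasure μ] {f : Fin N → Word N → ℂ}

/-- The density. -/
def Dens (f : Fin N → Word N → ℂ) (i : Fin N) (x : Word N) : ℝ≥0∞ :=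
  ENNReal.ofReal (‖f i x‖ ^ 2)

lemma map_eq_withDensity (hf2 : ∀ i, MemLp (f i) 2 μ)
    (hac : ∀ i, μ.map (prepend i) ≪ μ)
    (hrn : ∀ i, (μ.map (prepend i)).rnDeriv μ =ᵐ[μ]
      fun x => ENNReal.ofReal (‖f i x‖ ^ 2)) (i : Fin N) :
    μ.map (prepend i) = μ.withDensity (Dens f i) := by
  have h1 : μ.withDensity ((μ.map (prepend i)).rnDeriv μ) = μ.map (prepend i) :=
    haveI : (μ.map (prepend i)).HaveLebesgueDecomposition μ :=
      Measure.haveLebesgueDecomposition_of_finiteMeasure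
    Measure.withDensity_rnDeriv_eq _ _ (hac i)
  rw [← h1]
  exact withDensity_congr_ae (hrn i)

lemma aemeasurable_dens (hf2 : ∀ i, MemLp (f i) 2 μ) (i : Fin N) :
    AEMeasurable (Dens f i) μ := by
  have := (hf2 i).aestronglyMeasurable.aemeasurable
  exact (this.norm.pow_const 2).ennreal_ofReal

lemma f_zero_off (hf2 : ∀ i, MemLp (f i) 2 μ)
    (hac : ∀ i, μ.map (prepend i) ≪ μ)
    (hrn : ∀ i, (μ.map (prepend i)).rnDeriv μ =ᵐ[μ]
      fun x => ENNReal.ofReal (‖f i x‖ ^ 2)) (i : Fin N) :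
    ∀ᵐ x ∂μ, x 0 ≠ i → f i x = 0 := by
  have hA : MeasurableSet {x : Word N | x 0 ≠ i} := by
    have : {x : Word N | x 0 ≠ i} = (fun x : Word N => x 0) ⁻¹' {i}ᶜ := rfl
    rw [this]
    exact (measurable_pi_apply 0) (MeasurableSet.singleton i).compl
  have h0 : (μ.map (prepend i)) {x : Word N | x 0 ≠ i} = 0 := by
    rw [Measure.map_apply (measurable_prepend i) hA]
    convert measure_empty (μ := μ)
    ext ω
    simp [prepend]
  rw [map_eq_withDensity hf2 hac hrn i, withDensity_apply _ hA] at h0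
  have h1 : ∀ᵐ x ∂(μ.restrict {x : Word N | x 0 ≠ i}), Dens f i x = 0 := by
    have := (lintegral_eq_zero_iff' ((aemeasurable_dens hf2 i).restrict (s := {x : Word N | x 0 ≠ i}))).mp h0
    exact this
  rw [ae_restrict_iff' hA] at h1
  filter_upwards [h1] with x hx hx0
  have := hx hx0
  simp only [Dens, ENNReal.ofReal_eq_zero] at this
  have : ‖f i x‖ ^ 2 = 0 := le_antisymm this (by positivity)
  simpa using pow_eq_zero_iff (n := 2) (by norm_num) |>.mp (by simpa using this)


lemma lintegral_comp_prepend (hf2 : ∀ i, MemLp (f i) 2 μ)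
    (hac : ∀ i, μ.map (prepend i) ≪ μ)
    (hrn : ∀ i, (μ.map (prepend i)).rnDeriv μ =ᵐ[μ]
      fun x => ENNReal.ofReal (‖f i x‖ ^ 2)) (i : Fin N)
    {φ : Word N → ℝ≥0∞} (hφ : AEMeasurable φ μ) :
    ∫⁻ ω, φ (prepend i ω) ∂μ = ∫⁻ x, Dens f i x * φ x ∂μ := by
  have hφ' : AEMeasurable φ (μ.map (prepend i)) := hφ.mono_ac (hac i)
  rw [← lintegral_map' hφ' (measurable_prepend i).aemeasurable,
    map_eq_withDensity hf2 hac hrn i,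
    lintegral_withDensity_eq_lintegral_mul₀' (aemeasurable_dens hf2 i)
      (by rwa [← map_eq_withDensity hf2 hac hrn i])]
  rfl

lemma integral_comp_prepend (hf2 : ∀ i, MemLp (f i) 2 μ)
    (hac : ∀ i, μ.map (prepend i) ≪ μ)
    (hrn : ∀ i, (μ.map (prepend i)).rnDeriv μ =ᵐ[μ]
      fun x => ENNReal.ofReal (‖f i x‖ ^ 2)) (i : Fin N)
    {ψ : Word N → ℂ} (hψ : AEStronglyMeasurable ψ (μ.map (prepend i))) :
    ∫ ω, ψ (prepend i ω) ∂μ = ∫ x, (‖f i x‖ ^ 2) • ψ x ∂μ := by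
  have h1 : ∫ ω, ψ (prepend i ω) ∂μ = ∫ x, ψ x ∂(μ.map (prepend i)) :=
    (integral_map (measurable_prepend i).aemeasurable hψ).symm
  rw [h1, map_eq_withDensity hf2 hac hrn i]
  have hρ : AEMeasurable (fun x => ‖f i x‖₊ ^ 2) μ := by
    have := (hf2 i).aestronglyMeasurable.aemeasurable
    exact this.nnnorm.pow_const 2
  have hD : (Dens f i) = fun x => ((fun y => ‖f i y‖₊ ^ 2) x : ℝ≥0∞) := by
    funext x
    simp only [Dens, ENNReal.ofReal_pow (norm_nonneg _), ofReal_norm, enorm_eq_nnnorm]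
    push_cast
    ring
  rw [hD, integral_withDensity_eq_integral_smul₀ hρ]
  apply integral_congr_ae
  filter_upwards with x
  have hc : ((‖f i x‖₊ ^ 2 : ℝ≥0) : ℝ) = ‖f i x‖ ^ 2 := by push_cast; ring
  rw [NNReal.smul_def, hc]


/-- The candidate for the adjoint. -/
def Tfun (f : Fin N → Word N → ℂ) (i : Fin N) (g : Word N → ℂ) (ω : Word N) : ℂ :=
  (f i (prepend i ω))⁻¹ * g (prepend i ω)

lemma aestronglyMeasurable_comp_prepend (hac : ∀ i, μ.map (prepend i) ≪ μ) (i : Fin N)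
    {h : Word N → ℂ} (hh : AEStronglyMeasurable h μ) :
    AEStronglyMeasurable (fun ω => h (prepend i ω)) μ :=
  (hh.mono_ac (hac i)).comp_aemeasurable (measurable_prepend i).aemeasurable

lemma memLp_Tfun (hf2 : ∀ i, MemLp (f i) 2 μ)
    (hac : ∀ i, μ.map (prepend i) ≪ μ)
    (hrn : ∀ i, (μ.map (prepend i)).rnDeriv μ =ᵐ[μ]
      fun x => ENNReal.ofReal (‖f i x‖ ^ 2)) (i : Fin N)
    {g : Word N → ℂ} (hg : MemLp g 2 μ) : MemLp (Tfun f i g) 2 μ := by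
  have hfm := (hf2 i).aestronglyMeasurable.aemeasurable
  have hgm := hg.aestronglyMeasurable.aemeasurable
  have hmul : AEStronglyMeasurable (fun x => (f i x)⁻¹ * g x) μ :=
    (hfm.inv.mul hgm).aestronglyMeasurable
  constructor
  · exact aestronglyMeasurable_comp_prepend hac i hmul
  · rw [eLpNorm_lt_top_iff_lintegral_rpow_enorm_lt_top (by norm_num) (by norm_num)]
    simp only [enorm_eq_nnnorm]
    have hφ : AEMeasurable (fun x => ((‖(f i x)⁻¹ * g x‖₊ : ℝ≥0∞)) ^ (2:ℝ≥0∞).toReal) μ :=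
      ((hfm.inv.mul hgm).nnnorm.coe_nnreal_ennreal.pow_const _)
    have key : (∫⁻ ω, (‖Tfun f i g ω‖₊ : ℝ≥0∞) ^ (2:ℝ≥0∞).toReal ∂μ)
        = ∫⁻ x, Dens f i x * ((‖(f i x)⁻¹ * g x‖₊ : ℝ≥0∞)) ^ (2:ℝ≥0∞).toReal ∂μ :=
      lintegral_comp_prepend hf2 hac hrn i hφ
    rw [key]
    have hbound : ∀ x, Dens f i x * ((‖(f i x)⁻¹ * g x‖₊ : ℝ≥0∞)) ^ (2:ℝ≥0∞).toReal
        ≤ (‖g x‖₊ : ℝ≥0∞) ^ (2:ℝ≥0∞).toReal := by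
      intro x
      have h2 : (2:ℝ≥0∞).toReal = (2:ℝ) := by simp
      rw [h2]
      have hD : Dens f i x = (‖f i x‖₊ : ℝ≥0∞) ^ (2:ℝ) := by
        simp only [Dens]
        rw [show ((2:ℝ)) = ((2:ℕ):ℝ) by norm_num, ENNReal.rpow_natCast,
          ENNReal.ofReal_pow (norm_nonneg _), ofReal_norm, enorm_eq_nnnorm]
      rw [hD, ← ENNReal.mul_rpow_of_nonneg _ _ (by norm_num)]
      apply ENNReal.rpow_le_rpow _ (by norm_num)
      rw [← ENNReal.coe_mul, ← nnnorm_mul]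
      apply ENNReal.coe_le_coe.mpr
      rcases eq_or_ne (f i x) 0 with h0 | h0
      · simp [h0]
      · rw [show f i x * ((f i x)⁻¹ * g x) = g x by field_simp]
    calc ∫⁻ x, Dens f i x * ((‖(f i x)⁻¹ * g x‖₊ : ℝ≥0∞)) ^ (2:ℝ≥0∞).toReal ∂μ
        ≤ ∫⁻ x, (‖g x‖₊ : ℝ≥0∞) ^ (2:ℝ≥0∞).toReal ∂μ := lintegral_mono hbound
      _ < ⊤ := by
          exact (eLpNorm_lt_top_iff_lintegral_rpow_enorm_lt_top (by norm_num) (by norm_num)).mp hg.2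


local notation "⟪" x ", " y "⟫" => @inner ℂ _ _ x y

lemma map_shift_prepend (i : Fin N) : (μ.map (prepend i)).map shift = μ := by
  rw [Measure.map_map measurable_shift (measurable_prepend i)]
  have : shift ∘ prepend i = id := by funext ω; exact shift_prepend i ω
  rw [this, Measure.map_id]

lemma adjoint_S_eq (hf2 : ∀ i, MemLp (f i) 2 μ)
    (hac : ∀ i, μ.map (prepend i) ≪ μ)
    (hrn : ∀ i, (μ.map (prepend i)).rnDeriv μ =ᵐ[μ]
      fun x => ENNReal.ofReal (‖f i x‖ ^ 2)) (i : Fin N)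
    (S_i : Lp ℂ 2 μ →L[ℂ] Lp ℂ 2 μ)
    (hSi : ∀ h : Lp ℂ 2 μ, ⇑(S_i h) =ᵐ[μ] fun x => f i x * h (shift x))
    (g : Lp ℂ 2 μ) :
    ⇑(ContinuousLinearMap.adjoint S_i g) =ᵐ[μ] Tfun f i ⇑g := by
  have hmem : MemLp (Tfun f i ⇑g) 2 μ := memLp_Tfun hf2 hac hrn i (Lp.memLp g)
  have key : ContinuousLinearMap.adjoint S_i g = hmem.toLp _ := by
    apply ext_inner_left ℂ
    intro h
    rw [ContinuousLinearMap.adjoint_inner_right]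
    set ψ : Word N → ℂ :=
      fun x => (starRingEnd ℂ) (h (shift x)) * ((f i x)⁻¹ * g x) with hψdef
    have hψ : AEStronglyMeasurable ψ (μ.map (prepend i)) := by
      have hh0 : AEStronglyMeasurable (⇑h) ((μ.map (prepend i)).map shift) := by
        rw [map_shift_prepend]; exact (Lp.memLp h).aestronglyMeasurable
      have hh : AEStronglyMeasurable (fun x => h (shift x)) (μ.map (prepend i)) :=
        hh0.comp_aemeasurable measurable_shift.aemeasurable
      have h1 : AEStronglyMeasurable (fun x => (starRingEnd ℂ) (h (shift x)))
          (μ.map (prepend i)) := RCLike.continuous_conj.comp_aestronglyMeasurable hh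
      have h2 : AEStronglyMeasurable (fun x => (f i x)⁻¹ * g x) (μ.map (prepend i)) :=
        (((hf2 i).aestronglyMeasurable.aemeasurable.inv.mul
          (Lp.memLp g).aestronglyMeasurable.aemeasurable).aestronglyMeasurable).mono_ac (hac i)
      exact h1.mul h2
    have e1 : ⟪S_i h, g⟫ = ∫ x, (starRingEnd ℂ) (f i x * h (shift x)) * g x ∂μ := by
      rw [L2.inner_def]
      apply integral_congr_ae
      filter_upwards [hSi h] with x hx
      rw [RCLike.inner_apply, hx, mul_comm]
    have e2 : ⟪h, hmem.toLp _⟫ = ∫ ω, ψ (prepend i ω) ∂μ := by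
      rw [L2.inner_def]
      apply integral_congr_ae
      filter_upwards [hmem.coeFn_toLp] with ω hω
      rw [RCLike.inner_apply, hω]
      exact mul_comm _ _
    have e3 : ∫ ω, ψ (prepend i ω) ∂μ = ∫ x, (‖f i x‖ ^ 2) • ψ x ∂μ :=
      integral_comp_prepend hf2 hac hrn i hψ
    have e4 : ∀ x, (‖f i x‖ ^ 2) • ψ x = (starRingEnd ℂ) (f i x * h (shift x)) * g x := by
      intro x
      rw [hψdef]
      simp only
      rcases eq_or_ne (f i x) 0 with h0 | h0
      · simp [h0]
      · have hc : ((‖f i x‖ ^ 2 : ℝ) : ℂ) = f i x * (starRingEnd ℂ) (f i x) := by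
          rw [Complex.mul_conj, Complex.normSq_eq_norm_sq]
        rw [map_mul]
        rw [show ((‖f i x‖ ^ 2 : ℝ)) • ((starRingEnd ℂ) (h (shift x)) * ((f i x)⁻¹ * g x))
            = ((‖f i x‖ ^ 2 : ℝ) : ℂ) * ((starRingEnd ℂ) (h (shift x)) * ((f i x)⁻¹ * g x))
          from Complex.real_smul]
        rw [hc]
        field_simp
    rw [e1, e2, e3]
    exact integral_congr_ae (Filter.Eventually.of_forall e4) |>.symm ▸ rfl
  rw [key]
  exact hmem.coeFn_toLp


lemma f_zero_on_null (hf2 : ∀ i, MemLp (f i) 2 μ)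
    (hac : ∀ i, μ.map (prepend i) ≪ μ)
    (hrn : ∀ i, (μ.map (prepend i)).rnDeriv μ =ᵐ[μ]
      fun x => ENNReal.ofReal (‖f i x‖ ^ 2)) (i : Fin N)
    {A : Set (Word N)} (hA : MeasurableSet A) (h0 : μ.map (prepend i) A = 0) :
    ∀ᵐ x ∂μ, x ∈ A → f i x = 0 := by
  rw [map_eq_withDensity hf2 hac hrn i, withDensity_apply _ hA] at h0
  have h1 : ∀ᵐ x ∂(μ.restrict A), Dens f i x = 0 :=
    (lintegral_eq_zero_iff' ((aemeasurable_dens hf2 i).restrict (s := A))).mp h0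
  rw [ae_restrict_iff' hA] at h1
  filter_upwards [h1] with x hx hx0
  have := hx hx0
  simp only [Dens, ENNReal.ofReal_eq_zero] at this
  have : ‖f i x‖ ^ 2 = 0 := le_antisymm this (by positivity)
  simpa using pow_eq_zero_iff (n := 2) (by norm_num) |>.mp (by simpa using this)

lemma mul_shift_congr (hf2 : ∀ i, MemLp (f i) 2 μ)
    (hac : ∀ i, μ.map (prepend i) ≪ μ)
    (hrn : ∀ i, (μ.map (prepend i)).rnDeriv μ =ᵐ[μ]
      fun x => ENNReal.ofReal (‖f i x‖ ^ 2)) (i : Fin N)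
    {v v' : Word N → ℂ} (hvv : v =ᵐ[μ] v') :
    (fun x => f i x * v (shift x)) =ᵐ[μ] fun x => f i x * v' (shift x) := by
  have hnull : μ {x | ¬ v x = v' x} = 0 := ae_iff.mp hvv
  obtain ⟨A, hsub, hAm, hA0⟩ := exists_measurable_superset_of_null hnull
  set B := {x : Word N | x 0 = i} ∩ shift ⁻¹' A with hBdef
  have hBm : MeasurableSet B := by
    apply MeasurableSet.inter
    · have : {x : Word N | x 0 = i} = (fun x : Word N => x 0) ⁻¹' {i} := rfl
      rw [this]
      exact (measurable_pi_apply 0) (MeasurableSet.singleton i)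
    · exact measurable_shift hAm
  have hB0 : μ.map (prepend i) B = 0 := by
    rw [Measure.map_apply (measurable_prepend i) hBm]
    have : prepend i ⁻¹' B = A := by
      ext ω
      simp only [hBdef, Set.mem_preimage, Set.mem_inter_iff, Set.mem_setOf_eq]
      constructor
      · rintro ⟨-, hω⟩; exact hω
      · intro hω; exact ⟨rfl, by rwa [shift_prepend]⟩
    rw [this]; exact hA0
  have h1 := f_zero_on_null hf2 hac hrn i hBm hB0
  have h2 := f_zero_off hf2 hac hrn i
  filter_upwards [h1, h2] with x hx1 hx2
  by_cases hx0 : x 0 = i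
  · by_cases hxA : shift x ∈ A
    · rw [hx1 ⟨hx0, hxA⟩]; simp
    · have : v (shift x) = v' (shift x) := by
        by_contra hc; exact hxA (hsub hc)
      rw [this]
  · rw [hx2 hx0]; simp

end Meas

theorem monicSystem_word_projection {N : ℕ} (hN : 2 ≤ N)
    (μ : Measure (Word N)) [IsFiniteMeasure μ] (f : Fin N → Word N → ℂ)
    (hf2 : ∀ i, MemLp (f i) 2 μ)
    (hac : ∀ i, μ.map (prepend i) ≪ μ)
    (hrn : ∀ i, (μ.map (prepend i)).rnDeriv μ =ᵐ[μ]
      fun x => ENNReal.ofReal (‖f i x‖ ^ 2))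
    (hne : ∀ i, ∀ᵐ x ∂μ, x 0 = i → f i x ≠ 0)
    (S : Fin N → (Lp ℂ 2 μ →L[ℂ] Lp ℂ 2 μ))
    (hS : ∀ i (g : Lp ℂ 2 μ), ⇑(S i g) =ᵐ[μ] fun x => f i x * g (shift x))
    (w : List (Fin N)) :
    ∀ g : Lp ℂ 2 μ,
      ⇑(((w.map S).prod * ContinuousLinearMap.adjoint (w.map S).prod) g) =ᵐ[μ]
        Set.indicator (cyl w) ⇑g := by
  induction w with
  | nil =>
    intro g
    simp only [List.map_nil, List.prod_nil, cyl_nil, Set.indicator_univ]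
    have h1 : ((1 : Lp ℂ 2 μ →L[ℂ] Lp ℂ 2 μ) *
        ContinuousLinearMap.adjoint (1 : Lp ℂ 2 μ →L[ℂ] Lp ℂ 2 μ)) g = g := by
      rw [← ContinuousLinearMap.star_eq_adjoint, star_one, one_mul,
        ContinuousLinearMap.one_apply]
    rw [h1]
  | cons i w ih =>
    intro g
    simp only [List.map_cons, List.prod_cons]
    set T := (w.map S).prod with hT
    set u := ContinuousLinearMap.adjoint (S i) g with hu
    have happ : ((S i * T) * ContinuousLinearMap.adjoint (S i * T)) g
        = S i ((T * ContinuousLinearMap.adjoint T) u) := by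
      rw [← ContinuousLinearMap.star_eq_adjoint, star_mul]
      simp only [ContinuousLinearMap.mul_apply, ContinuousLinearMap.star_eq_adjoint, hu]
    rw [happ]
    have hu_eq : ⇑u =ᵐ[μ] Tfun f i ⇑g := adjoint_S_eq hf2 hac hrn i (S i) (hS i) g
    have hv := ih u
    have hv' : ⇑((T * ContinuousLinearMap.adjoint T) u) =ᵐ[μ]
        Set.indicator (cyl w) (Tfun f i ⇑g) := by
      filter_upwards [hv, hu_eq] with x h1 h2
      rw [h1]
      by_cases hx : x ∈ cyl w
      · rw [Set.indicator_of_mem hx, Set.indicator_of_mem hx, h2]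
      · rw [Set.indicator_of_notMem hx, Set.indicator_of_notMem hx]
    have hmain := mul_shift_congr hf2 hac hrn i hv'
    filter_upwards [hS i ((T * ContinuousLinearMap.adjoint T) u), hmain,
      f_zero_off hf2 hac hrn i, hne i] with x hSx hmx hz hn
    rw [hSx]
    rw [hmx]
    by_cases hx0 : x 0 = i
    · have hps : prepend i (shift x) = x := prepend_shift hx0
      by_cases hxc : shift x ∈ cyl w
      · have hmem : x ∈ cyl (i :: w) := mem_cyl_cons.mpr ⟨hx0, hxc⟩
        rw [Set.indicator_of_mem hxc, Set.indicator_of_mem hmem]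
        simp only [Tfun, hps]
        field_simp [hn hx0]
      · have hmem : x ∉ cyl (i :: w) := fun hc => hxc (mem_cyl_cons.mp hc).2
        rw [Set.indicator_of_notMem hxc, Set.indicator_of_notMem hmem, mul_zero]
    · have hmem : x ∉ cyl (i :: w) := fun hc => hx0 (mem_cyl_cons.mp hc).1
      rw [Set.indicator_of_notMem hmem, hz hx0, zero_mul]
end
end

section
/- Let (μ, (f_i)) and (μ', (f_i')) be two nonnegative monic systems on K_N. If μ and μ' are mutually singular, then any bounded operator W : L²(μ) → L²(μ') intertwining the two associated Cuntz-algebra representations (W S_i = S_i' W for all i) is zero. -/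
open MeasureTheory ENNReal

noncomputable section

namespace MonicAux

variable {N : ℕ}

lemma measurable_prepend (i : Fin N) : Measurable (prepend i) := by
  apply measurable_pi_iff.mpr
  intro n
  match n with
  | 0 => exact measurable_const
  | n + 1 => exact measurable_pi_apply n

lemma measurable_shift : Measurable (shift : Word N → Word N) := by
  apply measurable_pi_iff.mpr
  intro n
  exact measurable_pi_apply (n + 1)

@[simp] lemma shift_prepend (i : Fin N) (x : Word N) : shift (prepend i x) = x := rfl

@[simp] lemma prepend_zero (i : Fin N) (x : Word N) : prepend i x 0 = i := rfl

lemma prepend_shift {i : Fin N} {x : Word N} (h : x 0 = i) : prepend i (shift x) = x := by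
  funext n
  match n with
  | 0 => exact h.symm
  | n + 1 => rfl

/-- Cylinder sets, defined by recursion on the word. -/
def cylL : List (Fin N) → Set (Word N)
  | [] => Set.univ
  | i :: w => {ω | ω 0 = i ∧ shift ω ∈ cylL w}

@[simp] lemma cylL_nil : cylL ([] : List (Fin N)) = Set.univ := rfl

lemma mem_cylL_cons {i : Fin N} {w : List (Fin N)} {x : Word N} :
    x ∈ cylL (i :: w) ↔ x 0 = i ∧ shift x ∈ cylL w := Iff.rfl

lemma measurableSet_eq0 (i : Fin N) : MeasurableSet {ω : Word N | ω 0 = i} := by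
  have := (measurable_pi_apply (X := fun _ : ℕ => Fin N) 0) (MeasurableSet.singleton i)
  convert this using 1
  rfl

lemma measurableSet_cylL (w : List (Fin N)) : MeasurableSet (cylL w) := by
  induction w with
  | nil => exact MeasurableSet.univ
  | cons i w ih => exact (measurableSet_eq0 i).inter (measurable_shift ih)

lemma prepend_mem_cylL_cons {i : Fin N} {w : List (Fin N)} {x : Word N} :
    prepend i x ∈ cylL (i :: w) ↔ x ∈ cylL w := by
  simp [mem_cylL_cons]

lemma shift_iterate (n : ℕ) (x : Word N) (m : ℕ) : (shift^[n] x) m = x (m + n) := by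
  induction n generalizing x with
  | zero => rfl
  | succ n ih =>
    rw [Function.iterate_succ_apply, ih]
    change x (m + n + 1) = x (m + (n + 1))
    rw [Nat.add_assoc]

lemma mem_cylL_append {a b : List (Fin N)} {x : Word N} :
    x ∈ cylL (a ++ b) ↔ x ∈ cylL a ∧ shift^[a.length] x ∈ cylL b := by
  induction a generalizing x with
  | nil => simp [cylL]
  | cons i a ih =>
    simp only [List.cons_append, mem_cylL_cons, ih, List.length_cons,
      Function.iterate_succ_apply]
    tauto

lemma mem_cylL_ofFn {n : ℕ} {v : Fin n → Fin N} {x : Word N} :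
    x ∈ cylL (List.ofFn v) ↔ ∀ k : Fin n, x k = v k := by
  induction n generalizing x with
  | zero => simp [cylL]
  | succ n ih =>
    rw [List.ofFn_succ, mem_cylL_cons, ih]
    constructor
    · rintro ⟨h0, hs⟩ k
      rcases Fin.eq_zero_or_eq_succ k with rfl | ⟨j, rfl⟩
      · exact h0
      · simpa [shift] using hs j
    · intro h
      refine ⟨h 0, fun j => ?_⟩
      simpa [shift] using h j.succ

lemma mem_cylL_singleton {j : Fin N} {x : Word N} : x ∈ cylL [j] ↔ x 0 = j := by
  simp [cylL]

lemma cylL_ofFn_disjoint {n : ℕ} {v v' : Fin n → Fin N} (h : v ≠ v') :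
    Disjoint (cylL (List.ofFn v)) (cylL (List.ofFn v')) := by
  rw [Set.disjoint_left]
  intro x hx hx'
  rw [mem_cylL_ofFn] at hx hx'
  exact h (funext fun k => (hx k).symm.trans (hx' k))

lemma iUnion_cylL_ofFn (n : ℕ) : (⋃ v : Fin n → Fin N, cylL (List.ofFn v)) = Set.univ := by
  ext x
  simp only [Set.mem_iUnion, Set.mem_univ, iff_true]
  exact ⟨fun k => x k, mem_cylL_ofFn.mpr fun k => rfl⟩


lemma sum_indicator_cylL (n : ℕ) (φ : Word N → ℂ) (x : Word N) :
    ∑ v : Fin n → Fin N, (cylL (List.ofFn v)).indicator φ x = φ x := by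
  classical
  rw [Finset.sum_eq_single (fun k : Fin n => x k)]
  · exact Set.indicator_of_mem (mem_cylL_ofFn.mpr fun k => rfl) φ
  · intro v _ hv
    refine Set.indicator_of_notMem (fun hc => hv ?_) φ
    exact funext fun k => ((mem_cylL_ofFn.mp hc) k).symm
  · intro hx
    exact absurd (Finset.mem_univ _) hx

lemma cylL_inter_nonempty (v w : List (Fin N)) (h : (cylL v ∩ cylL w).Nonempty) :
    ∃ u : List (Fin N), cylL v ∩ cylL w = cylL u := by
  induction v generalizing w with
  | nil => exact ⟨w, by simp [cylL]⟩
  | cons i v ih =>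
    match w with
    | [] => exact ⟨i :: v, by simp [cylL]⟩
    | j :: w =>
      obtain ⟨x, hxv, hxw⟩ := h
      rw [mem_cylL_cons] at hxv hxw
      have hij : i = j := hxv.1.symm.trans hxw.1
      subst hij
      obtain ⟨u, hu⟩ := ih w ⟨shift x, hxv.2, hxw.2⟩
      refine ⟨i :: u, ?_⟩
      ext y
      simp only [Set.mem_inter_iff, mem_cylL_cons]
      constructor
      · rintro ⟨⟨h1, h2⟩, ⟨h3, h4⟩⟩
        exact ⟨h1, hu ▸ Set.mem_inter h2 h4⟩
      · rintro ⟨h1, h2⟩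
        rw [← hu] at h2
        exact ⟨⟨h1, h2.1⟩, ⟨h1, h2.2⟩⟩

lemma isPiSystem_cylL : IsPiSystem {E : Set (Word N) | ∃ w, E = cylL w} := by
  rintro _ ⟨v, rfl⟩ _ ⟨w, rfl⟩ hne
  obtain ⟨u, hu⟩ := cylL_inter_nonempty v w hne
  exact ⟨u, hu⟩

lemma generateFrom_cylL :
    (inferInstance : MeasurableSpace (Word N)) =
      MeasurableSpace.generateFrom {E : Set (Word N) | ∃ w, E = cylL w} := by
  apply le_antisymm
  · rw [show (inferInstance : MeasurableSpace (Word N)) = MeasurableSpace.pi from rfl]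
    refine iSup_le fun n => ?_
    rintro s ⟨S, -, rfl⟩
    have hEq : (fun x : Word N => x n) ⁻¹' S =
        ⋃ j ∈ S, ⋃ v : Fin n → Fin N, cylL (List.ofFn v ++ [j]) := by
      ext x
      simp only [Set.mem_preimage, Set.mem_iUnion, mem_cylL_append, mem_cylL_ofFn,
        mem_cylL_singleton, List.length_ofFn, shift_iterate, Nat.zero_add]
      constructor
      · intro hx
        exact ⟨x n, hx, fun k => x k, fun k => rfl, rfl⟩
      · rintro ⟨j, hj, v, -, hv⟩
        exact hv ▸ hj
    rw [hEq]
    refine MeasurableSet.biUnion (Set.to_countable S) fun j _ => ?_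
    exact MeasurableSet.iUnion fun v =>
      MeasurableSpace.measurableSet_generateFrom ⟨List.ofFn v ++ [j], rfl⟩
  · refine MeasurableSpace.generateFrom_le ?_
    rintro _ ⟨w, rfl⟩
    exact measurableSet_cylL w

section NormHelpers

variable {α : Type*} [MeasurableSpace α] (μ : Measure α)

lemma eLpNorm_two_eq (g : α → ℂ) :
    eLpNorm g 2 μ = (∫⁻ x, (‖g x‖₊ : ℝ≥0∞)^2 ∂μ) ^ (1/2 : ℝ) := by
  rw [eLpNorm_eq_lintegral_rpow_enorm_toReal two_ne_zero ENNReal.ofNat_ne_top]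
  simp only [ENNReal.toReal_ofNat, enorm_eq_nnnorm]
  congr 1
  refine lintegral_congr fun x => ?_
  rw [show (2:ℝ) = ((2:ℕ):ℝ) by norm_num, ENNReal.rpow_natCast]

lemma memLp_two_of {g : α → ℂ} (hm : AEStronglyMeasurable g μ)
    (hlt : ∫⁻ x, (‖g x‖₊ : ℝ≥0∞)^2 ∂μ < ∞) : MemLp g 2 μ := by
  refine ⟨hm, ?_⟩
  rw [eLpNorm_two_eq]
  exact ENNReal.rpow_lt_top_of_nonneg (by norm_num) hlt.ne

lemma lint_sq_lt_top (h : Lp ℂ 2 μ) : ∫⁻ x, (‖h x‖₊ : ℝ≥0∞)^2 ∂μ < ∞ := by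
  have := Lp.eLpNorm_lt_top h
  rw [eLpNorm_two_eq] at this
  by_contra hc
  push_neg at hc
  rw [top_le_iff.mp hc, ENNReal.top_rpow_of_pos (by norm_num)] at this
  exact (lt_irrefl _ this).elim

lemma ae_zero_on_iff {E : Set α} (hE : MeasurableSet E) {u : α → ℂ}
    (hu : AEMeasurable u μ) :
    (∀ᵐ x ∂μ, x ∈ E → u x = 0) ↔
      ∫⁻ x, E.indicator (fun x => (‖u x‖₊ : ℝ≥0∞)^2) x ∂μ = 0 := by
  rw [lintegral_eq_zero_iff' (f := E.indicator (fun x => (‖u x‖₊ : ℝ≥0∞)^2)) ((hu.enorm.pow_const 2).indicator hE)]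
  constructor
  · intro h
    filter_upwards [h] with x hx
    by_cases hxE : x ∈ E
    · simp [Set.indicator_of_mem hxE, hx hxE]
    · simp [Set.indicator_of_notMem hxE]
  · intro h
    filter_upwards [h] with x hx hxE
    rw [Set.indicator_of_mem hxE] at hx
    simpa using hx

lemma ofReal_sq_eq (t : ℝ) : ENNReal.ofReal (t ^ 2) = (‖t‖₊ : ℝ≥0∞) ^ 2 := by
  rw [← sq_abs, ENNReal.ofReal_pow (abs_nonneg t), ← Real.enorm_eq_ofReal_abs, enorm_eq_nnnorm]

end NormHelpers

section System

variable (μ : Measure (Word N)) [IsFiniteMeasure μ] (f : Fin N → Word N → ℝ)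

lemma lint_prepend (i : Fin N) (hac : μ.map (prepend i) ≪ μ)
    (hrn : (μ.map (prepend i)).rnDeriv μ =ᵐ[μ] fun x => ENNReal.ofReal (f i x ^ 2))
    {F : Word N → ℝ≥0∞} (hF : Measurable F) :
    ∫⁻ x, F (prepend i x) ∂μ = ∫⁻ x, F x * ENNReal.ofReal (f i x ^ 2) ∂μ := by
  rw [← lintegral_map hF (measurable_prepend i)]
  haveI : IsFiniteMeasure (μ.map (prepend i)) := inferInstance
  haveI : (μ.map (prepend i)).HaveLebesgueDecomposition μ :=
    Measure.haveLebesgueDecomposition_of_sigmaFinite _ _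
  conv_lhs => rw [← Measure.withDensity_rnDeriv_eq (μ.map (prepend i)) μ hac]
  rw [lintegral_withDensity_eq_lintegral_mul μ (Measure.measurable_rnDeriv _ _) hF]
  refine lintegral_congr_ae ?_
  filter_upwards [hrn] with x hx
  simp only [Pi.mul_apply, hx, mul_comm]

lemma lint_shift (i : Fin N) (hac : μ.map (prepend i) ≪ μ)
    (hrn : (μ.map (prepend i)).rnDeriv μ =ᵐ[μ] fun x => ENNReal.ofReal (f i x ^ 2))
    {F : Word N → ℝ≥0∞} (hF : Measurable F) :
    ∫⁻ x, F (shift x) * ENNReal.ofReal (f i x ^ 2) ∂μ = ∫⁻ x, F x ∂μ :=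
  (lint_prepend μ f i hac hrn (hF.comp measurable_shift)).symm

lemma f_ae_zero_off (i : Fin N) (hfm : AEMeasurable (f i) μ) (hac : μ.map (prepend i) ≪ μ)
    (hrn : (μ.map (prepend i)).rnDeriv μ =ᵐ[μ] fun x => ENNReal.ofReal (f i x ^ 2)) :
    ∀ᵐ x ∂μ, x 0 ≠ i → f i x = 0 := by
  set E : Set (Word N) := {y : Word N | y 0 ≠ i} with hE
  have hEm : MeasurableSet E := (measurableSet_eq0 i).compl
  have hFm : Measurable (E.indicator (fun _ => (1 : ℝ≥0∞))) :=
    measurable_const.indicator hEm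
  have h0 : ∫⁻ x, E.indicator (fun _ => (1:ℝ≥0∞)) x * ENNReal.ofReal (f i x ^ 2) ∂μ = 0 := by
    rw [← lint_prepend μ f i hac hrn hFm]
    have : ∀ x : Word N, E.indicator (fun _ => (1:ℝ≥0∞)) (prepend i x) = 0 := by
      intro x
      apply Set.indicator_of_notMem
      simp [hE, prepend]
    simp [this]
  have hmul : AEMeasurable (fun x => E.indicator (fun _ => (1:ℝ≥0∞)) x
      * ENNReal.ofReal (f i x ^ 2)) μ :=
    (hFm.aemeasurable).mul
      (ENNReal.measurable_ofReal.comp_aemeasurable (hfm.pow_const 2))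
  have hae := (lintegral_eq_zero_iff' hmul).mp h0
  filter_upwards [hae] with x hx hxi
  have hx1 : E.indicator (fun _ => (1:ℝ≥0∞)) x = 1 :=
    Set.indicator_of_mem (show x ∈ E from hxi) _
  rw [Pi.zero_apply, hx1, one_mul, ENNReal.ofReal_eq_zero] at hx
  have h2 := sq_nonneg (f i x)
  nlinarith [hx]


variable (S : Fin N → (Lp ℂ 2 μ →L[ℂ] Lp ℂ 2 μ))

lemma supp_S (i : Fin N) (w : List (Fin N))
    (hfm : AEMeasurable (f i) μ) (hac : μ.map (prepend i) ≪ μ)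
    (hrn : (μ.map (prepend i)).rnDeriv μ =ᵐ[μ] fun x => ENNReal.ofReal (f i x ^ 2))
    (u : Lp ℂ 2 μ)
    (hSi : ⇑(S i u) =ᵐ[μ] fun x => (f i x : ℂ) * u (shift x))
    (hu : ∀ᵐ x ∂μ, x ∉ cylL w → u x = 0) :
    ∀ᵐ x ∂μ, x ∉ cylL (i :: w) → (S i u) x = 0 := by
  have humeas : Measurable ⇑u := (Lp.stronglyMeasurable u).measurable
  set G : Word N → ℝ≥0∞ :=
    (cylL w)ᶜ.indicator (fun y => (‖u y‖₊ : ℝ≥0∞)^2) with hG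
  have hGmeas : Measurable G :=
    (humeas.enorm.pow_const 2).indicator (measurableSet_cylL w).compl
  have hu0 : ∫⁻ x, G x ∂μ = 0 := by
    refine (ae_zero_on_iff μ (measurableSet_cylL w).compl humeas.aemeasurable).mp ?_
    filter_upwards [hu] with x hx hxmem
    exact hx hxmem
  have hkey : ∫⁻ x, G (shift x) * ENNReal.ofReal (f i x ^ 2) ∂μ = 0 := by
    rw [lint_shift μ f i hac hrn hGmeas, hu0]
  have hmul : AEMeasurable (fun x => G (shift x) * ENNReal.ofReal (f i x ^ 2)) μ :=
    ((hGmeas.comp measurable_shift).aemeasurable).mul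
      (ENNReal.measurable_ofReal.comp_aemeasurable (hfm.pow_const 2))
  have hae := (lintegral_eq_zero_iff' hmul).mp hkey
  filter_upwards [hae, hSi, f_ae_zero_off μ f i hfm hac hrn] with x hx hSx hf0 hxnot
  rw [hSx]
  by_cases hx0 : x 0 = i
  · have hsh : shift x ∉ cylL w := fun hc => hxnot (mem_cylL_cons.mpr ⟨hx0, hc⟩)
    rw [Pi.zero_apply, hG] at hx
    rw [Set.indicator_of_mem (show shift x ∈ (cylL w)ᶜ from hsh)] at hx
    rcases mul_eq_zero.mp hx with h1 | h2
    · have : u (shift x) = 0 := by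
        simpa using h1
      simp [this]
    · have : f i x = 0 := by
        rw [ENNReal.ofReal_eq_zero] at h2
        nlinarith [sq_nonneg (f i x), h2]
      simp [this]
  · simp [hf0 hx0]


/-- Iterated application of the operators along a word. -/
def SWa (w : List (Fin N)) (g : Lp ℂ 2 μ) : Lp ℂ 2 μ := w.foldr (fun i v => S i v) g

@[simp] lemma SWa_nil (g : Lp ℂ 2 μ) : SWa μ S [] g = g := rfl

@[simp] lemma SWa_cons (i : Fin N) (w : List (Fin N)) (g : Lp ℂ 2 μ) :
    SWa μ S (i :: w) g = S i (SWa μ S w g) := rfl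

lemma surj_S (hf2 : ∀ i, MemLp (f i) 2 μ)
    (hac : ∀ i, μ.map (prepend i) ≪ μ)
    (hrn : ∀ i, (μ.map (prepend i)).rnDeriv μ =ᵐ[μ] fun x => ENNReal.ofReal (f i x ^ 2))
    (hne : ∀ i, ∀ᵐ x ∂μ, x 0 = i → f i x ≠ 0)
    (hS : ∀ i (g : Lp ℂ 2 μ), ⇑(S i g) =ᵐ[μ] fun x => (f i x : ℂ) * g (shift x)) :
    ∀ (w : List (Fin N)) (h : Lp ℂ 2 μ), (∀ᵐ x ∂μ, x ∉ cylL w → h x = 0) →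
      ∃ g : Lp ℂ 2 μ, SWa μ S w g = h := by
  intro w
  induction w with
  | nil => exact fun h _ => ⟨h, rfl⟩
  | cons i w IH =>
    intro h hsupp
    have hfae : AEStronglyMeasurable (f i) μ := (hf2 i).aestronglyMeasurable
    set fm : Word N → ℝ := hfae.mk (f i) with hfmdef
    have hfm_meas : Measurable fm := hfae.stronglyMeasurable_mk.measurable
    have hfe : f i =ᵐ[μ] fm := hfae.ae_eq_mk
    have hfm_ae : AEMeasurable (f i) μ := hfae.aemeasurable
    have hhmeas : Measurable ⇑h := (Lp.stronglyMeasurable h).measurable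
    set q : Word N → ℂ := fun y => if fm y = 0 then 0 else h y / (fm y : ℂ) with hq
    have hqmeas : Measurable q := by
      refine Measurable.ite (hfm_meas (MeasurableSet.singleton 0)) measurable_const ?_
      exact hhmeas.div (Complex.measurable_ofReal.comp hfm_meas)
    set F : Word N → ℝ≥0∞ := fun y => (‖q y‖₊ : ℝ≥0∞)^2 with hF
    have hFmeas : Measurable F := hqmeas.enorm.pow_const 2
    set g₀ : Word N → ℂ := fun x => q (prepend i x) with hg₀
    have hg₀meas : Measurable g₀ := hqmeas.comp (measurable_prepend i)
    -- the key pointwise bound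
    have hbd : ∀ᵐ y ∂μ, F y * ENNReal.ofReal (f i y ^ 2) ≤ (‖h y‖₊ : ℝ≥0∞)^2 := by
      filter_upwards [hfe] with y hy
      by_cases h0 : fm y = 0
      · simp [hF, hq, h0]
      · have hqm : q y * ((fm y : ℝ) : ℂ) = h y := by
          simp only [hq, if_neg h0]
          have hne0 : ((fm y : ℝ) : ℂ) ≠ 0 := Complex.ofReal_ne_zero.mpr h0
          field_simp
        have hnn : ‖q y‖₊ * ‖fm y‖₊ = ‖(h y : ℂ)‖₊ := by
          have h2 : ‖q y * ((fm y : ℝ) : ℂ)‖₊ = ‖(h y : ℂ)‖₊ := by rw [hqm]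
          rw [nnnorm_mul, Complex.nnnorm_real] at h2
          exact h2
        have hineq : F y * ENNReal.ofReal (f i y ^ 2) = (‖h y‖₊ : ℝ≥0∞)^2 := by
          rw [hy, ofReal_sq_eq, hF, ← mul_pow, ← ENNReal.coe_mul, hnn]
        exact le_of_eq hineq
    -- g₀ is in L²
    have hg₀mem : MemLp g₀ 2 μ := by
      refine memLp_two_of μ hg₀meas.aestronglyMeasurable ?_
      have h1 : ∫⁻ x, (‖g₀ x‖₊ : ℝ≥0∞)^2 ∂μ = ∫⁻ x, F (prepend i x) ∂μ := rfl
      rw [h1, lint_prepend μ f i (hac i) (hrn i) hFmeas]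
      calc ∫⁻ y, F y * ENNReal.ofReal (f i y ^ 2) ∂μ
          ≤ ∫⁻ y, (‖h y‖₊ : ℝ≥0∞)^2 ∂μ := lintegral_mono_ae hbd
        _ < ∞ := lint_sq_lt_top μ h
    set g : Lp ℂ 2 μ := hg₀mem.toLp g₀ with hgdef
    have hgae : ⇑g =ᵐ[μ] g₀ := hg₀mem.coeFn_toLp
    -- support of g
    have hq_supp : ∫⁻ x, (cylL (i :: w))ᶜ.indicator (fun y => (‖h y‖₊ : ℝ≥0∞)^2) x ∂μ = 0 := by
      refine (ae_zero_on_iff μ (measurableSet_cylL (i :: w)).compl hhmeas.aemeasurable).mp ?_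
      filter_upwards [hsupp] with x hx hxmem
      exact hx hxmem
    have hgsupp : ∀ᵐ x ∂μ, x ∉ cylL w → g x = 0 := by
      have h2 : ∀ᵐ x ∂μ, x ∉ cylL w → g₀ x = 0 := by
        refine (ae_zero_on_iff μ (measurableSet_cylL w).compl hg₀meas.aemeasurable).mpr ?_
        have hptw : ∀ x, (cylL w)ᶜ.indicator (fun x => (‖g₀ x‖₊ : ℝ≥0∞)^2) x
            = ((cylL (i :: w))ᶜ.indicator F) (prepend i x) := by
          intro x
          by_cases hx : x ∈ cylL w
          · rw [Set.indicator_of_notMem (by simpa using hx),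
              Set.indicator_of_notMem (by simpa using prepend_mem_cylL_cons.mpr hx)]
          · rw [Set.indicator_of_mem (by simpa using hx),
              Set.indicator_of_mem (by simpa using fun hc => hx (prepend_mem_cylL_cons.mp hc))]
        have hmeasI : Measurable ((cylL (i :: w))ᶜ.indicator F) :=
          hFmeas.indicator (measurableSet_cylL (i :: w)).compl
        refine le_antisymm ?_ zero_le
        calc ∫⁻ x, (cylL w)ᶜ.indicator (fun x => (‖g₀ x‖₊ : ℝ≥0∞)^2) x ∂μ
            = ∫⁻ x, ((cylL (i :: w))ᶜ.indicator F) (prepend i x) ∂μ := by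
              exact lintegral_congr hptw
          _ = ∫⁻ y, ((cylL (i :: w))ᶜ.indicator F) y * ENNReal.ofReal (f i y ^ 2) ∂μ :=
              lint_prepend μ f i (hac i) (hrn i) hmeasI
          _ ≤ ∫⁻ y, (cylL (i :: w))ᶜ.indicator (fun y => (‖h y‖₊ : ℝ≥0∞)^2) y ∂μ := by
              refine lintegral_mono_ae ?_
              filter_upwards [hbd] with y hy
              by_cases hyE : y ∈ (cylL (i :: w))ᶜ
              · rw [Set.indicator_of_mem hyE, Set.indicator_of_mem hyE]
                exact hy
              · rw [Set.indicator_of_notMem hyE, Set.indicator_of_notMem hyE, zero_mul]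
          _ = 0 := hq_supp
      filter_upwards [hgae, h2] with x hx1 hx2 hxmem
      rw [hx1]
      exact hx2 hxmem
    -- S i g = h
    have hSg : S i g = h := by
      apply Lp.ext (p := (2:ℝ≥0∞)) (μ := μ)
      have hdiff : ∀ᵐ x ∂μ, (f i x : ℂ) * g (shift x) = (f i x : ℂ) * g₀ (shift x) := by
        have hdm : Measurable (fun y => (‖g y - g₀ y‖₊ : ℝ≥0∞)^2) :=
          (((Lp.stronglyMeasurable g).measurable.sub hg₀meas).enorm).pow_const 2
        have h0 : ∫⁻ y, (‖g y - g₀ y‖₊ : ℝ≥0∞)^2 ∂μ = 0 := by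
          rw [← lintegral_zero]
          refine lintegral_congr_ae ?_
          filter_upwards [hgae] with y hy
          simp [hy]
        have hkey : ∫⁻ x, (fun y => (‖g y - g₀ y‖₊ : ℝ≥0∞)^2) (shift x)
            * ENNReal.ofReal (f i x ^ 2) ∂μ = 0 := by
          rw [lint_shift μ f i (hac i) (hrn i) hdm, h0]
        have hmul : AEMeasurable (fun x => (fun y => (‖g y - g₀ y‖₊ : ℝ≥0∞)^2) (shift x)
            * ENNReal.ofReal (f i x ^ 2)) μ :=
          ((hdm.comp measurable_shift).aemeasurable).mul
            (ENNReal.measurable_ofReal.comp_aemeasurable (hfm_ae.pow_const 2))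
        have hae := (lintegral_eq_zero_iff' hmul).mp hkey
        filter_upwards [hae] with x hx
        rcases mul_eq_zero.mp hx with h1 | h2
        · have h1' : (‖g (shift x) - g₀ (shift x)‖₊ : ℝ≥0∞) = 0 :=
            pow_eq_zero_iff (by norm_num : (2:ℕ) ≠ 0) |>.mp h1
          have h3 : ‖g (shift x) - g₀ (shift x)‖₊ = 0 := by exact_mod_cast h1'
          rw [nnnorm_eq_zero, sub_eq_zero] at h3
          rw [h3]
        · have : f i x = 0 := by
            rw [ENNReal.ofReal_eq_zero] at h2
            nlinarith [sq_nonneg (f i x), h2]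
          simp [this]
      have hfin : ∀ᵐ x ∂μ, (f i x : ℂ) * g₀ (shift x) = h x := by
        filter_upwards [hne i, f_ae_zero_off μ f i hfm_ae (hac i) (hrn i), hsupp, hfe]
          with x hnex hf0x hsuppx hfex
        by_cases hx0 : x 0 = i
        · have hpre : prepend i (shift x) = x := prepend_shift hx0
          have hfmne : fm x ≠ 0 := by
            rw [← hfex]
            exact hnex hx0
          simp only [hg₀]
          rw [hpre]
          simp only [hq, if_neg hfmne]
          rw [hfex]
          have : ((fm x : ℝ) : ℂ) ≠ 0 := Complex.ofReal_ne_zero.mpr hfmne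
          field_simp
        · have hfx : f i x = 0 := hf0x hx0
          have hhx : h x = 0 := hsuppx (fun hc => hx0 (mem_cylL_cons.mp hc).1)
          simp [hfx, hhx]
      calc ⇑(S i g) =ᵐ[μ] fun x => (f i x : ℂ) * g (shift x) := hS i g
        _ =ᵐ[μ] fun x => (f i x : ℂ) * g₀ (shift x) := hdiff
        _ =ᵐ[μ] ⇑h := hfin
    obtain ⟨g', hg'⟩ := IH g hgsupp
    exact ⟨g', by rw [SWa_cons, hg', hSg]⟩


lemma supp_SWa (hf2 : ∀ i, MemLp (f i) 2 μ)
    (hac : ∀ i, μ.map (prepend i) ≪ μ)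
    (hrn : ∀ i, (μ.map (prepend i)).rnDeriv μ =ᵐ[μ] fun x => ENNReal.ofReal (f i x ^ 2))
    (hS : ∀ i (g : Lp ℂ 2 μ), ⇑(S i g) =ᵐ[μ] fun x => (f i x : ℂ) * g (shift x)) :
    ∀ (w : List (Fin N)) (v : Lp ℂ 2 μ), ∀ᵐ x ∂μ, x ∉ cylL w → (SWa μ S w v) x = 0 := by
  intro w
  induction w with
  | nil =>
    intro v
    filter_upwards with x hx
    exact absurd (Set.mem_univ x) hx
  | cons i w IH =>
    intro v
    exact supp_S μ f S i w (hf2 i).aestronglyMeasurable.aemeasurable (hac i) (hrn i)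
      (SWa μ S w v) (hS i _) (IH v)

lemma coeFn_finset_sum {ι : Type*} (s : Finset ι) (F : ι → Lp ℂ 2 μ) :
    ⇑(∑ j ∈ s, F j) =ᵐ[μ] fun x => ∑ j ∈ s, F j x := by
  classical
  induction s using Finset.induction_on with
  | empty =>
    simp only [Finset.sum_empty]
    exact Lp.coeFn_zero ℂ 2 μ
  | insert a t hj ih =>
    rw [Finset.sum_insert hj]
    filter_upwards [Lp.coeFn_add (F a) (∑ j ∈ t, F j), ih] with x hx1 hx2
    rw [hx1]
    simp only [Pi.add_apply, hx2, Finset.sum_insert hj]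

end System

section TwoSystems

variable {μ μ' : Measure (Word N)} [IsFiniteMeasure μ] [IsFiniteMeasure μ']

lemma W_SWa (S : Fin N → (Lp ℂ 2 μ →L[ℂ] Lp ℂ 2 μ))
    (S' : Fin N → (Lp ℂ 2 μ' →L[ℂ] Lp ℂ 2 μ'))
    (W : Lp ℂ 2 μ →L[ℂ] Lp ℂ 2 μ')
    (hW : ∀ i, W.comp (S i) = (S' i).comp W) :
    ∀ (w : List (Fin N)) (g : Lp ℂ 2 μ), W (SWa μ S w g) = SWa μ' S' w (W g) := by
  intro w
  induction w with
  | nil => intro g; rfl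
  | cons i w IH =>
    intro g
    have h1 : W (S i (SWa μ S w g)) = S' i (W (SWa μ S w g)) :=
      DFunLike.congr_fun (hW i) (SWa μ S w g)
    rw [SWa_cons, h1, IH g, SWa_cons]

end TwoSystems

end MonicAux

open Filter Topology in
open MonicAux in
theorem nonneg_monicSystem_disjoint_of_mutuallySingular {N : ℕ} (hN : 2 ≤ N)
    (μ μ' : Measure (Word N)) [IsFiniteMeasure μ] [IsFiniteMeasure μ']
    (f f' : Fin N → Word N → ℝ)
    (hf0 : ∀ i x, 0 ≤ f i x) (hf0' : ∀ i x, 0 ≤ f' i x)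
    (hf2 : ∀ i, MemLp (f i) 2 μ) (hf2' : ∀ i, MemLp (f' i) 2 μ')
    (hac : ∀ i, μ.map (prepend i) ≪ μ) (hac' : ∀ i, μ'.map (prepend i) ≪ μ')
    (hrn : ∀ i, (μ.map (prepend i)).rnDeriv μ =ᵐ[μ]
      fun x => ENNReal.ofReal (f i x ^ 2))
    (hrn' : ∀ i, (μ'.map (prepend i)).rnDeriv μ' =ᵐ[μ']
      fun x => ENNReal.ofReal (f' i x ^ 2))
    (hne : ∀ i, ∀ᵐ x ∂μ, x 0 = i → f i x ≠ 0)
    (hne' : ∀ i, ∀ᵐ x ∂μ', x 0 = i → f' i x ≠ 0)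
    (hsing : μ ⟂ₘ μ')
    (S : Fin N → (Lp ℂ 2 μ →L[ℂ] Lp ℂ 2 μ))
    (S' : Fin N → (Lp ℂ 2 μ' →L[ℂ] Lp ℂ 2 μ'))
    (hS : ∀ i (g : Lp ℂ 2 μ), ⇑(S i g) =ᵐ[μ] fun x => (f i x : ℂ) * g (shift x))
    (hS' : ∀ i (g : Lp ℂ 2 μ'), ⇑(S' i g) =ᵐ[μ'] fun x => (f' i x : ℂ) * g (shift x))
    (W : Lp ℂ 2 μ →L[ℂ] Lp ℂ 2 μ')
    (hW : ∀ i, W.comp (S i) = (S' i).comp W) :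
    W = 0 := by
  classical
  -- Step 1 : W maps functions supported on a cylinder to functions supported on it
  have step1 : ∀ (w : List (Fin N)) (u : Lp ℂ 2 μ),
      (∀ᵐ x ∂μ, x ∉ cylL w → u x = 0) →
      (∀ᵐ x ∂μ', x ∉ cylL w → (W u) x = 0) := by
    intro w u hu
    obtain ⟨g, hg⟩ := surj_S μ f S hf2 hac hrn hne hS w u hu
    rw [← hg, W_SWa S S' W hW]
    exact supp_SWa μ' f' S' hf2' hac' hrn' hS' w (W g)
  -- the commuting property, as a predicate on sets
  set P : Set (Word N) → Prop := fun E =>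
    ∀ g u : Lp ℂ 2 μ, ⇑u =ᵐ[μ] E.indicator ⇑g →
      ⇑(W u) =ᵐ[μ'] E.indicator ⇑(W g) with hP
  have hPempty : P ∅ := by
    intro g u hu
    have hu0 : u = 0 := by
      apply Lp.ext (p := (2:ℝ≥0∞)) (μ := μ)
      refine hu.trans ?_
      rw [Set.indicator_empty]
      exact (Lp.coeFn_zero ℂ 2 μ).symm
    rw [hu0, map_zero, Set.indicator_empty]
    exact Lp.coeFn_zero ℂ 2 μ'
  have hPcyl : ∀ E ∈ {E : Set (Word N) | ∃ w, E = cylL w}, P E := by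
    rintro _ ⟨w, rfl⟩ g u hu
    set n := w.length with hn
    -- u is supported on the cylinder
    have hu_supp : ∀ᵐ x ∂μ, x ∉ cylL w → u x = 0 := by
      filter_upwards [hu] with x hx hnot
      rw [hx, Set.indicator_of_notMem hnot]
    have hWu_off := step1 w u hu_supp
    -- the difference g - u is supported off the cylinder
    have hgu : ∀ᵐ x ∂μ, ((g : Lp ℂ 2 μ) - u) x = g x - u x := Lp.coeFn_sub g u
    -- decompose g - u over all cylinders of length n
    set dv : (Fin n → Fin N) → Lp ℂ 2 μ := fun v =>
      ((Lp.memLp (g - u)).indicator (measurableSet_cylL (List.ofFn v))).toLp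
        ((cylL (List.ofFn v)).indicator ⇑(g - u)) with hdv
    have hdv_coe : ∀ v, ⇑(dv v) =ᵐ[μ] (cylL (List.ofFn v)).indicator ⇑(g - u) :=
      fun v => MemLp.coeFn_toLp _
    have hdv_supp : ∀ v, ∀ᵐ x ∂μ, x ∉ cylL (List.ofFn v) → (dv v) x = 0 := by
      intro v
      filter_upwards [hdv_coe v] with x hx hnot
      rw [hx, Set.indicator_of_notMem hnot]
    have hWdv : ∀ v, ∀ᵐ x ∂μ', x ∉ cylL (List.ofFn v) → (W (dv v)) x = 0 :=
      fun v => step1 _ (dv v) (hdv_supp v)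
    -- the cylinder itself corresponds to the word `fun k => w.get k`
    set vw : Fin n → Fin N := fun k => w.get k with hvw
    have hofFn : List.ofFn vw = w := List.ofFn_get w
    -- the summand for vw is zero
    have hdvw : dv vw = 0 := by
      apply Lp.ext (p := (2:ℝ≥0∞)) (μ := μ)
      have : ⇑(dv vw) =ᵐ[μ] 0 := by
        filter_upwards [hdv_coe vw, hgu, hu] with x h1 h2 h3
        rw [h1, hofFn]
        by_cases hxw : x ∈ cylL w
        · rw [Set.indicator_of_mem hxw, h2, h3, Set.indicator_of_mem hxw, sub_self]
          rfl
        · rw [Set.indicator_of_notMem hxw]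
          rfl
      exact this.trans (Lp.coeFn_zero ℂ 2 μ).symm
    -- sum of the pieces is g - u
    have hsum : (∑ v : Fin n → Fin N, dv v) = g - u := by
      apply Lp.ext (p := (2:ℝ≥0∞)) (μ := μ)
      have h1 := coeFn_finset_sum μ (Finset.univ : Finset (Fin n → Fin N)) dv
      refine h1.trans ?_
      have h2 : ∀ᵐ x ∂μ, ∀ v : Fin n → Fin N,
          (dv v) x = (cylL (List.ofFn v)).indicator ⇑(g - u) x :=
        ae_all_iff.mpr hdv_coe
      filter_upwards [h2] with x hx
      calc ∑ v : Fin n → Fin N, (dv v) x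
          = ∑ v : Fin n → Fin N, (cylL (List.ofFn v)).indicator ⇑(g - u) x :=
            Finset.sum_congr rfl fun v _ => hx v
        _ = (g - u : Lp ℂ 2 μ) x := sum_indicator_cylL n _ x
    -- hence W (g - u) vanishes a.e. on the cylinder
    have hWd_on : ∀ᵐ x ∂μ', x ∈ cylL w → (W ((g : Lp ℂ 2 μ) - u)) x = 0 := by
      have hmap : W ((g : Lp ℂ 2 μ) - u) = ∑ v : Fin n → Fin N, W (dv v) := by
        rw [← hsum, map_sum]
      rw [hmap]
      have h1 := coeFn_finset_sum μ' (Finset.univ : Finset (Fin n → Fin N)) (fun v => W (dv v))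
      have h2 : ∀ᵐ x ∂μ', ∀ v : Fin n → Fin N,
          x ∉ cylL (List.ofFn v) → (W (dv v)) x = 0 := ae_all_iff.mpr hWdv
      have hz : ⇑(W (dv vw)) =ᵐ[μ'] 0 := by
        rw [hdvw, map_zero]
        exact Lp.coeFn_zero ℂ 2 μ'
      filter_upwards [h1, h2, hz] with x hx1 hx2 hzx hxw
      rw [hx1]
      refine Finset.sum_eq_zero fun v _ => ?_
      by_cases hv : v = vw
      · rw [hv]
        exact hzx
      · refine hx2 v fun hc => ?_
        have hxvw : x ∈ cylL (List.ofFn vw) := hofFn ▸ hxw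
        exact (Set.disjoint_left.mp (cylL_ofFn_disjoint hv) hc) hxvw
    -- combine
    have hWsub : ∀ᵐ x ∂μ', (W ((g : Lp ℂ 2 μ) - u)) x = (W g) x - (W u) x := by
      rw [map_sub]
      exact Lp.coeFn_sub (W g) (W u)
    filter_upwards [hWu_off, hWd_on, hWsub] with x h1 h2 h3
    by_cases hxw : x ∈ cylL w
    · rw [Set.indicator_of_mem hxw]
      have h4 := h2 hxw
      rw [h3] at h4
      exact (sub_eq_zero.mp h4).symm
    · rw [Set.indicator_of_notMem hxw]
      exact h1 hxw
  have hPcompl : ∀ E : Set (Word N), MeasurableSet E → P E → P Eᶜ := by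
    intro E hE hPE g u hu
    have hv : ⇑((g : Lp ℂ 2 μ) - u) =ᵐ[μ] E.indicator ⇑g := by
      filter_upwards [Lp.coeFn_sub g u, hu] with x h1 h2
      rw [h1]
      simp only [Pi.sub_apply]
      by_cases hxE : x ∈ E
      · rw [Set.indicator_of_mem hxE]
        rw [Set.indicator_of_notMem (by simpa using hxE)] at h2
        rw [h2, sub_zero]
      · rw [Set.indicator_of_notMem hxE]
        rw [Set.indicator_of_mem (by simpa using hxE)] at h2
        rw [h2, sub_self]
    have hWv := hPE g ((g : Lp ℂ 2 μ) - u) hv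
    have hWsub : ∀ᵐ x ∂μ', (W ((g : Lp ℂ 2 μ) - u)) x = (W g) x - (W u) x := by
      rw [map_sub]
      exact Lp.coeFn_sub (W g) (W u)
    filter_upwards [hWv, hWsub] with x h1 h2
    rw [h2] at h1
    by_cases hxE : x ∈ E
    · rw [Set.indicator_of_notMem (by simpa using hxE)]
      rw [Set.indicator_of_mem hxE] at h1
      exact sub_eq_self.mp h1
    · rw [Set.indicator_of_mem (by simpa using hxE)]
      rw [Set.indicator_of_notMem hxE] at h1
      exact (sub_eq_zero.mp h1).symm
  
  -- finite disjoint unions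
  have hP2 : ∀ E₁ E₂ : Set (Word N), MeasurableSet E₁ → MeasurableSet E₂ → Disjoint E₁ E₂ →
      P E₁ → P E₂ → P (E₁ ∪ E₂) := by
    intro E₁ E₂ h1 h2 hdis hp1 hp2 g u hu
    set u₁ : Lp ℂ 2 μ := ((Lp.memLp g).indicator h1).toLp (E₁.indicator ⇑g) with hu₁def
    set u₂ : Lp ℂ 2 μ := ((Lp.memLp g).indicator h2).toLp (E₂.indicator ⇑g) with hu₂def
    have hc₁ : ⇑u₁ =ᵐ[μ] E₁.indicator ⇑g := MemLp.coeFn_toLp _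
    have hc₂ : ⇑u₂ =ᵐ[μ] E₂.indicator ⇑g := MemLp.coeFn_toLp _
    have hW₁ := hp1 g u₁ hc₁
    have hW₂ := hp2 g u₂ hc₂
    have husum : u = u₁ + u₂ := by
      apply Lp.ext (p := (2:ℝ≥0∞)) (μ := μ)
      filter_upwards [hu, hc₁, hc₂, Lp.coeFn_add u₁ u₂] with x h3 h4 h5 h6
      rw [h3, h6]
      simp only [Pi.add_apply]
      rw [h4, h5, Set.indicator_union_of_disjoint hdis]
    rw [husum, map_add]
    filter_upwards [Lp.coeFn_add (W u₁) (W u₂), hW₁, hW₂] with x h3 h4 h5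
    rw [h3]
    simp only [Pi.add_apply]
    rw [h4, h5, Set.indicator_union_of_disjoint hdis]
  -- countable disjoint unions
  have hPunion : ∀ Es : ℕ → Set (Word N), Pairwise (Function.onFun Disjoint Es) →
      (∀ k, MeasurableSet (Es k)) → (∀ k, P (Es k)) → P (⋃ k, Es k) := by
    intro Es hdisj hmeas hPk g u hu
    set E : Set (Word N) := ⋃ k, Es k with hE
    have hEmeas : MeasurableSet E := MeasurableSet.iUnion hmeas
    set B : ℕ → Set (Word N) := fun n => ⋃ k ∈ Finset.range n, Es k with hB
    have hBmeas : ∀ n, MeasurableSet (B n) :=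
      fun n => (Finset.range n).measurableSet_biUnion (fun k _ => hmeas k)
    have hBsubE : ∀ n, B n ⊆ E := by
      intro n x hx
      simp only [hB, Set.mem_iUnion, Finset.mem_range] at hx
      obtain ⟨k, _, hk⟩ := hx
      exact Set.mem_iUnion.mpr ⟨k, hk⟩
    have hBmem : ∀ {x : Word N} {k n : ℕ}, k < n → x ∈ Es k → x ∈ B n := by
      intro x k n hkn hxk
      simp only [hB, Set.mem_iUnion, Finset.mem_range]
      exact ⟨k, hkn, hxk⟩
    have hPB : ∀ n, P (B n) := by
      intro n
      induction n with
      | zero =>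
        have : B 0 = ∅ := by simp [hB]
        rw [this]
        exact hPempty
      | succ n ih =>
        have hBsucc : B (n + 1) = B n ∪ Es n := by
          ext x
          simp only [hB, Set.mem_iUnion, Finset.mem_range, Set.mem_union]
          constructor
          · rintro ⟨k, hk, hxk⟩
            rcases Nat.lt_succ_iff_lt_or_eq.mp hk with h | rfl
            · exact Or.inl ⟨k, h, hxk⟩
            · exact Or.inr hxk
          · rintro (⟨k, hk, hxk⟩ | hxk)
            · exact ⟨k, Nat.lt_succ_of_lt hk, hxk⟩
            · exact ⟨n, Nat.lt_succ_self n, hxk⟩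
        have hdisBn : Disjoint (B n) (Es n) := by
          rw [Set.disjoint_left]
          intro x hx hxn
          simp only [hB, Set.mem_iUnion, Finset.mem_range] at hx
          obtain ⟨k, hk, hxk⟩ := hx
          exact Set.disjoint_left.mp (hdisj (Nat.ne_of_lt hk)) hxk hxn
        rw [hBsucc]
        exact hP2 (B n) (Es n) (hBmeas n) (hmeas n) hdisBn ih (hPk n)
    -- the approximants (indicators of the partial unions)
    set un : ℕ → Lp ℂ 2 μ :=
      fun n => ((Lp.memLp g).indicator (hBmeas n)).toLp ((B n).indicator ⇑g) with hun
    have hunc : ∀ n, ⇑(un n) =ᵐ[μ] (B n).indicator ⇑g := fun n => MemLp.coeFn_toLp _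
    have hWun : ∀ n, ⇑(W (un n)) =ᵐ[μ'] (B n).indicator ⇑(W g) :=
      fun n => hPB n g (un n) (hunc n)
    -- L² convergence of the approximants to u
    set an : ℕ → ℝ≥0∞ :=
      fun n => ∫⁻ x, (E \ B n).indicator (fun x => (‖g x‖₊ : ℝ≥0∞)^2) x ∂μ with han
    have haTo : Tendsto an atTop (𝓝 0) := by
      have h0 : (0:ℝ≥0∞) = ∫⁻ _x, (0:ℝ≥0∞) ∂μ := lintegral_zero.symm
      rw [han, h0]
      refine tendsto_lintegral_of_dominated_convergence (fun x => (‖g x‖₊ : ℝ≥0∞)^2)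
        ?_ ?_ ?_ ?_
      · intro n
        exact (((Lp.stronglyMeasurable g).measurable.enorm).pow_const 2).indicator
          (hEmeas.diff (hBmeas n))
      · intro n
        filter_upwards with x
        exact Set.indicator_le_self _ _ x
      · exact (lint_sq_lt_top μ g).ne
      · filter_upwards with x
        by_cases hxE : x ∈ E
        · obtain ⟨k, hk⟩ := Set.mem_iUnion.mp hxE
          refine tendsto_atTop_of_eventually_const (i₀ := k + 1) ?_
          intro n hn
          exact Set.indicator_of_notMem
            (fun hc => hc.2 (hBmem (lt_of_lt_of_le (Nat.lt_succ_self k) hn) hk)) _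
        · refine tendsto_atTop_of_eventually_const (i₀ := 0) ?_
          intro n _
          exact Set.indicator_of_notMem (fun hc => hxE hc.1) _
    have hnorm : ∀ n, ‖un n - u‖ = Real.sqrt ((an n).toReal) := by
      intro n
      have hdiffe : ⇑(un n - u) =ᵐ[μ] fun x => -((E \ B n).indicator ⇑g x) := by
        filter_upwards [Lp.coeFn_sub (un n) u, hunc n, hu] with x h1 h2 h3
        rw [h1]
        simp only [Pi.sub_apply]
        rw [h2, h3]
        by_cases hxB : x ∈ B n
        · rw [Set.indicator_of_mem hxB, Set.indicator_of_mem (hBsubE n hxB),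
            Set.indicator_of_notMem (fun hc => hc.2 hxB), sub_self, neg_zero]
        · by_cases hxE : x ∈ E
          · rw [Set.indicator_of_notMem hxB, Set.indicator_of_mem hxE,
              Set.indicator_of_mem (Set.mem_diff_of_mem hxE hxB), zero_sub]
          · rw [Set.indicator_of_notMem hxB, Set.indicator_of_notMem hxE,
              Set.indicator_of_notMem (fun hc => hxE hc.1), sub_self, neg_zero]
      rw [Lp.norm_def, eLpNorm_congr_ae hdiffe]
      have hneg : eLpNorm (fun x => -((E \ B n).indicator ⇑g x)) 2 μ
          = eLpNorm ((E \ B n).indicator ⇑g) 2 μ := by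
        rw [show (fun x => -((E \ B n).indicator ⇑g x)) = -((E \ B n).indicator ⇑g)
          from rfl, eLpNorm_neg]
      rw [hneg, eLpNorm_two_eq]
      have hint : ∫⁻ x, (‖(E \ B n).indicator ⇑g x‖₊ : ℝ≥0∞)^2 ∂μ = an n := by
        rw [han]
        refine lintegral_congr fun x => ?_
        by_cases hx : x ∈ E \ B n
        · rw [Set.indicator_of_mem hx, Set.indicator_of_mem hx]
        · rw [Set.indicator_of_notMem hx, Set.indicator_of_notMem hx]
          simp
      rw [hint, ← ENNReal.toReal_rpow, Real.sqrt_eq_rpow]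
    have hnorm0 : Tendsto (fun n => ‖un n - u‖) atTop (𝓝 0) := by
      have h1 : Tendsto (fun n => (an n).toReal) atTop (𝓝 0) := by
        have h2 := (ENNReal.tendsto_toReal (a := 0) (by simp)).comp haTo
        simpa [Function.comp_def] using h2
      have h2 := (Real.continuous_sqrt.tendsto 0).comp h1
      rw [Real.sqrt_zero] at h2
      have h3 : (fun n => ‖un n - u‖) = fun n => Real.sqrt ((an n).toReal) :=
        funext hnorm
      rw [h3]
      exact h2
    have hWnorm0 : Tendsto (fun n => ‖W (un n) - W u‖) atTop (𝓝 0) := by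
      refine squeeze_zero (g := fun n => ‖W‖ * ‖un n - u‖) (fun n => norm_nonneg _)
        (fun n => ?_) ?_
      · calc ‖W (un n) - W u‖ = ‖W (un n - u)‖ := by rw [map_sub]
          _ ≤ ‖W‖ * ‖un n - u‖ := W.le_opNorm _
      · simpa using hnorm0.const_mul ‖W‖
    have heLp : Tendsto (fun n => eLpNorm (⇑(W (un n)) - ⇑(W u)) 2 μ') atTop (𝓝 0) := by
      have hkey : ∀ n, eLpNorm (⇑(W (un n)) - ⇑(W u)) 2 μ'
          = ENNReal.ofReal ‖W (un n) - W u‖ := by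
        intro n
        rw [← eLpNorm_congr_ae (Lp.coeFn_sub (W (un n)) (W u)),
          Lp.norm_def, ENNReal.ofReal_toReal (Lp.eLpNorm_ne_top _)]
      simp only [hkey]
      have h4 := (ENNReal.continuous_ofReal.tendsto 0).comp hWnorm0
      simpa [Function.comp_def, ofReal_norm] using h4
    obtain ⟨ns, hns_mono, hns_ae⟩ :=
      (tendstoInMeasure_of_tendsto_eLpNorm (by norm_num : (2:ℝ≥0∞) ≠ 0)
        (fun n => Lp.aestronglyMeasurable _) (Lp.aestronglyMeasurable _)
        heLp).exists_seq_tendsto_ae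
    have hWall : ∀ᵐ x ∂μ', ∀ n, (W (un n)) x = (B n).indicator ⇑(W g) x :=
      ae_all_iff.mpr hWun
    filter_upwards [hns_ae, hWall] with x hx hall
    have hx' : Tendsto (fun j => (B (ns j)).indicator ⇑(W g) x) atTop (𝓝 ((W u) x)) :=
      Tendsto.congr (fun j => hall (ns j)) hx
    by_cases hxE : x ∈ E
    · obtain ⟨k, hk⟩ := Set.mem_iUnion.mp hxE
      have hconst : Tendsto (fun j => (B (ns j)).indicator ⇑(W g) x) atTop (𝓝 ((W g) x)) := by
        refine tendsto_atTop_of_eventually_const (i₀ := k + 1) ?_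
        intro j hj
        refine Set.indicator_of_mem ?_ _
        exact hBmem (lt_of_lt_of_le (Nat.lt_succ_self k) (le_trans hj hns_mono.le_apply)) hk
      rw [Set.indicator_of_mem hxE]
      exact tendsto_nhds_unique hx' hconst
    · have hconst : Tendsto (fun j => (B (ns j)).indicator ⇑(W g) x) atTop (𝓝 0) := by
        refine tendsto_atTop_of_eventually_const (i₀ := 0) ?_
        intro j _
        exact Set.indicator_of_notMem (fun hc => hxE (hBsubE _ hc)) _
      rw [Set.indicator_of_notMem hxE]
      exact tendsto_nhds_unique hx' hconst
  -- run the π–λ induction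
  have hPall : ∀ E : Set (Word N), MeasurableSet E → P E := fun E hE =>
    MeasurableSpace.induction_on_inter (C := fun s _ => P s) generateFrom_cylL isPiSystem_cylL
      hPempty hPcyl hPcompl hPunion E hE
  -- conclude using mutual singularity
  obtain ⟨s, hsm, hs, hs'⟩ := hsing
  ext g
  have hgind : ⇑g =ᵐ[μ] (sᶜ).indicator ⇑g := by
    have hae : ∀ᵐ x ∂μ, x ∈ sᶜ := compl_mem_ae_iff.mpr hs
    filter_upwards [hae] with x hx
    rw [Set.indicator_of_mem hx]
  have hWg := hPall sᶜ hsm.compl g g hgind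
  have hfinal : ⇑(W g) =ᵐ[μ'] 0 := by
    have hs'' : ∀ᵐ x ∂μ', x ∈ s := by
      have : sᶜᶜ ∈ ae μ' := compl_mem_ae_iff.mpr hs'
      simpa using this
    filter_upwards [hWg, hs''] with x h1 h2
    rw [h1, Set.indicator_of_notMem (by simpa using h2)]
    rfl
  have hz : ⇑((0 : Lp ℂ 2 μ →L[ℂ] Lp ℂ 2 μ') g) =ᵐ[μ'] 0 := by
    rw [ContinuousLinearMap.zero_apply]
    exact Lp.coeFn_zero ℂ 2 μ'
  exact hfinal.trans hz.symm
end
end
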